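/- Let μ and μ' be probability distributions on X × A whose state marginals ν(x) = Σ_a μ(x,a) and ν'(x) = Σ_a μ'(x,a) satisfy the Bellman flow constraints ν = γ Pᵀμ + (1−γ) ν₀ and ν' = γ Pᵀμ' + (1−γ) ν₀. Then KL(ν ‖ ν') ≤ γ · KL(μ ‖ μ'). -/

import Mathlib

open scoped ENNReal

open Classical in
/-- Relative entropy between two (finitely supported) distributions given as functions,
valued in `[0,∞]`, with `KL(p‖q) = ∞` when `p` is not absolutely continuous w.r.t. `q`. -/
noncomputable def KLd {S : Type*} [Fintype S] (p q : S → ℝ) : ℝ≥0∞ :=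
  if ∀ s, q s = 0 → p s = 0 then
    ENNReal.ofReal (∑ s, if p s = 0 then (0 : ℝ) else p s * Real.log (p s / q s))
  else ⊤

open Classical in
/-- Log-sum inequality. -/
lemma log_sum_ineq {ι : Type*} [Fintype ι] (a b : ι → ℝ)
    (ha : ∀ i, 0 ≤ a i) (hb : ∀ i, 0 ≤ b i) (hab : ∀ i, b i = 0 → a i = 0)
    (hA : (∑ i, a i) ≠ 0) :
    (∑ i, a i) * Real.log ((∑ i, a i) / (∑ i, b i))
      ≤ ∑ i, if a i = 0 then (0:ℝ) else a i * Real.log (a i / b i) := by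
  set A := ∑ i, a i with hAdef
  set B := ∑ i, b i with hBdef
  have hA0 : 0 < A := lt_of_le_of_ne (Finset.sum_nonneg fun i _ => ha i) (Ne.symm hA)
  have hB0 : 0 < B := by
    rcases lt_or_eq_of_le (Finset.sum_nonneg fun i _ => hb i) with h | h
    · exact h
    · exfalso
      have hball : ∀ i ∈ Finset.univ, b i = 0 := by
        intro i _
        exact le_antisymm (by
          have := (Finset.sum_eq_zero_iff_of_nonneg (fun i _ => hb i)).1 h.symm i (Finset.mem_univ i)
          exact le_of_eq this) (hb i)
      exact hA (Finset.sum_eq_zero fun i _ => hab i (hball i (Finset.mem_univ i)))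
  have key : ∀ i, a i * Real.log (A / B) + (a i - b i * (A / B))
      ≤ if a i = 0 then (0:ℝ) else a i * Real.log (a i / b i) := by
    intro i
    by_cases h : a i = 0
    · simp only [h, if_true, zero_mul, zero_add, zero_sub]
      have : 0 ≤ b i * (A / B) := mul_nonneg (hb i) (div_nonneg hA0.le hB0.le)
      linarith
    · simp only [h, if_false]
      have hai : 0 < a i := lt_of_le_of_ne (ha i) (Ne.symm h)
      have hbi : 0 < b i := by
        rcases lt_or_eq_of_le (hb i) with h' | h'
        · exact h'
        · exact absurd (hab i h'.symm) h
      have hlog : Real.log (b i * A / (a i * B)) ≤ b i * A / (a i * B) - 1 :=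
        Real.log_le_sub_one_of_pos (by positivity)
      have hsplit : Real.log (a i / b i) - Real.log (A / B) = - Real.log (b i * A / (a i * B)) := by
        rw [Real.log_div hai.ne' hbi.ne', Real.log_div hA0.ne' hB0.ne',
          Real.log_div (mul_pos hbi hA0).ne' (mul_pos hai hB0).ne',
          Real.log_mul hbi.ne' hA0.ne', Real.log_mul hai.ne' hB0.ne']
        ring
      have h2 : Real.log (A / B) + (1 - b i * A / (a i * B)) ≤ Real.log (a i / b i) := by
        have := neg_le_neg hlog
        linarith [hsplit]
      have h3 : a i * (Real.log (A / B) + (1 - b i * A / (a i * B))) ≤ a i * Real.log (a i / b i) :=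
        mul_le_mul_of_nonneg_left h2 hai.le
      have h4 : a i * (1 - b i * A / (a i * B)) = a i - b i * (A / B) := by
        field_simp
      nlinarith [h3, h4]
  calc A * Real.log (A / B) = ∑ i, (a i * Real.log (A / B) + (a i - b i * (A / B))) := by
        rw [Finset.sum_add_distrib, Finset.sum_sub_distrib, ← Finset.sum_mul, ← Finset.sum_mul,
          ← hAdef, ← hBdef]
        field_simp
        ring
    _ ≤ _ := Finset.sum_le_sum fun i _ => key i


/-- Contraction of the relative entropy between state marginals:  if `μ, μ'` are distributions
on `X × A` whose state marginals `ν, ν'` satisfy the Bellman flow constraints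
`ν = γ Pᵀμ + (1−γ)ν₀` and `ν' = γ Pᵀμ' + (1−γ)ν₀`, then `KL(ν‖ν') ≤ γ KL(μ‖μ')`. -/
theorem stmt_3 {X A : Type*} [Fintype X] [Fintype A] [Nonempty X] [Nonempty A]
    (γ : ℝ) (hγ0 : 0 < γ) (hγ1 : γ < 1)
    (P : X → A → X → ℝ) (hP0 : ∀ x a x', 0 ≤ P x a x') (hP1 : ∀ x a, ∑ x', P x a x' = 1)
    (ν₀ : X → ℝ) (hν0 : ∀ x, 0 ≤ ν₀ x) (hν1 : ∑ x, ν₀ x = 1)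
    (μ μ' : X × A → ℝ)
    (hμ0 : ∀ p, 0 ≤ μ p) (hμ1 : ∑ p : X × A, μ p = 1)
    (hμ'0 : ∀ p, 0 ≤ μ' p) (hμ'1 : ∑ p : X × A, μ' p = 1)
    (hflow : ∀ x', ∑ a, μ (x', a)
        = γ * (∑ x, ∑ a, P x a x' * μ (x, a)) + (1 - γ) * ν₀ x')
    (hflow' : ∀ x', ∑ a, μ' (x', a)
        = γ * (∑ x, ∑ a, P x a x' * μ' (x, a)) + (1 - γ) * ν₀ x') :
    KLd (fun x => ∑ a, μ (x, a)) (fun x => ∑ a, μ' (x, a))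
      ≤ ENNReal.ofReal γ * KLd μ μ' := by
  classical
  have h1γ : 0 < 1 - γ := by linarith
  by_cases hac : ∀ p, μ' p = 0 → μ p = 0
  swap
  · simp only [KLd]
    rw [if_neg hac, ENNReal.mul_top (by simp [ENNReal.ofReal_eq_zero]; linarith)]
    exact le_top
  have hacν : ∀ x, (∑ a, μ' (x, a)) = 0 → (∑ a, μ (x, a)) = 0 := by
    intro x hx
    refine Finset.sum_eq_zero fun a _ => hac _ ?_
    exact (Finset.sum_eq_zero_iff_of_nonneg (fun a _ => hμ'0 (x, a))).1 hx a (Finset.mem_univ a)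
  simp only [KLd]
  rw [if_pos hacν, if_pos hac, ← ENNReal.ofReal_mul hγ0.le]
  apply ENNReal.ofReal_le_ofReal
  -- the real-valued inequality
  set c : X × A → ℝ := fun p => if μ p = 0 then (0:ℝ) else μ p * Real.log (μ p / μ' p) with hc
  set R : X → ℝ := fun x' => ∑ p : X × A, γ * P p.1 p.2 x' * c p with hR
  have step1 : ∀ x', (if (∑ a, μ (x', a)) = 0 then (0:ℝ)
      else (∑ a, μ (x', a)) * Real.log ((∑ a, μ (x', a)) / (∑ a, μ' (x', a)))) ≤ R x' := by
    intro x'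
    by_cases hz : (∑ a, μ (x', a)) = 0
    · rw [if_pos hz]
      refine le_of_eq (Finset.sum_eq_zero fun p _ => ?_).symm
      have hS : (∑ x, ∑ a, P x a x' * μ (x, a)) = 0 := by
        have hSnn : 0 ≤ ∑ x, ∑ a, P x a x' * μ (x, a) :=
          Finset.sum_nonneg fun x _ => Finset.sum_nonneg fun a _ =>
            mul_nonneg (hP0 x a x') (hμ0 (x, a))
        have h0 : 0 ≤ (1 - γ) * ν₀ x' := mul_nonneg h1γ.le (hν0 x')
        nlinarith [hflow x']
      have hPμ : P p.1 p.2 x' * μ p = 0 := by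
        have h1 := (Finset.sum_eq_zero_iff_of_nonneg (fun x _ =>
          Finset.sum_nonneg fun a _ => mul_nonneg (hP0 x a x') (hμ0 (x, a)))).1 hS p.1
          (Finset.mem_univ _)
        have h2 := (Finset.sum_eq_zero_iff_of_nonneg (fun a _ =>
          mul_nonneg (hP0 p.1 a x') (hμ0 (p.1, a)))).1 h1 p.2 (Finset.mem_univ _)
        exact h2
      by_cases hm : μ p = 0
      · simp [hc, hm]
      · have hP' : P p.1 p.2 x' = 0 := by
          rcases mul_eq_zero.1 hPμ with h | h
          · exact h
          · exact absurd h hm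
        simp [hP']
    · rw [if_neg hz]
      -- apply the log-sum inequality over `Option (X × A)`
      set a : Option (X × A) → ℝ :=
        fun o => o.elim ((1 - γ) * ν₀ x') (fun p => γ * (P p.1 p.2 x' * μ p)) with hadef
      set b : Option (X × A) → ℝ :=
        fun o => o.elim ((1 - γ) * ν₀ x') (fun p => γ * (P p.1 p.2 x' * μ' p)) with hbdef
      have hsum_a : (∑ o, a o) = ∑ α, μ (x', α) := by
        rw [Fintype.sum_option, hflow x']
        simp only [hadef, Option.elim]
        rw [← Finset.mul_sum, Fintype.sum_prod_type]
        ring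
      have hsum_b : (∑ o, b o) = ∑ α, μ' (x', α) := by
        rw [Fintype.sum_option, hflow' x']
        simp only [hbdef, Option.elim]
        rw [← Finset.mul_sum, Fintype.sum_prod_type]
        ring
      have ha : ∀ o, 0 ≤ a o := by
        rintro (_ | p)
        · exact mul_nonneg h1γ.le (hν0 x')
        · exact mul_nonneg hγ0.le (mul_nonneg (hP0 _ _ _) (hμ0 p))
      have hb : ∀ o, 0 ≤ b o := by
        rintro (_ | p)
        · exact mul_nonneg h1γ.le (hν0 x')
        · exact mul_nonneg hγ0.le (mul_nonneg (hP0 _ _ _) (hμ'0 p))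
      have hab : ∀ o, b o = 0 → a o = 0 := by
        rintro (_ | p) h
        · exact h
        · simp only [hadef, hbdef, Option.elim] at h ⊢
          rcases mul_eq_zero.1 h with h' | h'
          · exact absurd h' hγ0.ne'
          · rcases mul_eq_zero.1 h' with h'' | h''
            · simp [h'']
            · simp [hac p h'']
      have hAne : (∑ o, a o) ≠ 0 := by rwa [hsum_a]
      have := log_sum_ineq a b ha hb hab hAne
      rw [hsum_a, hsum_b] at this
      refine this.trans (le_of_eq ?_)
      rw [Fintype.sum_option]
      have hnone : (if a none = 0 then (0:ℝ) else a none * Real.log (a none / b none)) = 0 := by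
        by_cases h : a none = 0
        · rw [if_pos h]
        · rw [if_neg h]
          have : b none = a none := rfl
          rw [this, div_self h, Real.log_one, mul_zero]
      rw [hnone, zero_add, hR]
      refine Finset.sum_congr rfl fun p _ => ?_
      by_cases hP' : P p.1 p.2 x' = 0
      · simp [hadef, hP']
      · by_cases hm : μ p = 0
        · simp [hadef, hc, hm]
        · have hPpos : 0 < P p.1 p.2 x' := lt_of_le_of_ne (hP0 _ _ _) (Ne.symm hP')
          have hmpos : 0 < μ p := lt_of_le_of_ne (hμ0 p) (Ne.symm hm)
          have hane : a (some p) ≠ 0 := by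
            simp only [hadef, Option.elim]
            exact (by positivity : (0:ℝ) < γ * (P p.1 p.2 x' * μ p)).ne'
          rw [if_neg hane]
          simp only [hadef, hbdef, Option.elim, hc]
          rw [if_neg hm, mul_div_mul_left _ _ hγ0.ne', mul_div_mul_left _ _ hP']
          ring
  calc (∑ x', if (∑ a, μ (x', a)) = 0 then (0:ℝ)
        else (∑ a, μ (x', a)) * Real.log ((∑ a, μ (x', a)) / (∑ a, μ' (x', a))))
      ≤ ∑ x', R x' := Finset.sum_le_sum fun x' _ => step1 x'
    _ = γ * ∑ p : X × A, c p := by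
        rw [hR, Finset.sum_comm, Finset.mul_sum]
        refine Finset.sum_congr rfl fun p _ => ?_
        have : ∑ x', γ * P p.1 p.2 x' * c p = (γ * c p) * ∑ x', P p.1 p.2 x' := by
          rw [Finset.mul_sum]
          exact Finset.sum_congr rfl fun x' _ => by ring
        rw [this, hP1 p.1 p.2, mul_one]
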